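/- Let H ∈ ℝ^{n×n} be symmetric, g ∈ ℝⁿ, and M > 0. For every r ≥ 0 such that H + (Mr/2) I is positive definite, the lower bound inf_{z ∈ ℝⁿ} [⟨g, z⟩ + (1/2)⟨Hz, z⟩ + (M/6)‖z‖³] ≥ −(1/2)⟨(H + (Mr/2) I)⁻¹ g, g⟩ − (M/12) r³ holds. -/

import Mathlib

open scoped BigOperators
open Matrix in

/-- Let `H ∈ ℝ^{n×n}` be symmetric, `g ∈ ℝⁿ`, `M > 0`.  For every `r ≥ 0` such
that `H + (Mr/2) I` is positive definite, every `z ∈ ℝⁿ` satisfies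
`⟨g,z⟩ + (1/2)⟨Hz,z⟩ + (M/6)‖z‖³ ≥ −(1/2)⟨(H + (Mr/2) I)⁻¹ g, g⟩ − (M/12) r³`,
i.e. the stated lower bound on the infimum of the cubic model holds. -/
theorem statement11 {n : ℕ} (H : Matrix (Fin n) (Fin n) ℝ) (hH : H.IsSymm)
    (g : EuclideanSpace ℝ (Fin n)) (M : ℝ) (hM : 0 < M) (r : ℝ) (hr : 0 ≤ r)
    (hpd : (H + (M * r / 2) • (1 : Matrix (Fin n) (Fin n) ℝ)).PosDef) :
    ∀ z : EuclideanSpace ℝ (Fin n),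
      -(1 / 2) * (∑ i, ((H + (M * r / 2) • (1 : Matrix (Fin n) (Fin n) ℝ))⁻¹.mulVec
          (fun j => g j)) i * g i) - (M / 12) * r ^ 3 ≤
        (∑ i, g i * z i) + (1 / 2) * (∑ i, ∑ j, z i * H i j * z j) + (M / 6) * ‖z‖ ^ 3 := by
  intro z
  set A : Matrix (Fin n) (Fin n) ℝ := H + (M * r / 2) • (1 : Matrix (Fin n) (Fin n) ℝ) with hA
  set gv : Fin n → ℝ := fun j => g j with hgv
  set zv : Fin n → ℝ := fun j => z j with hzv
  have hdet : IsUnit A.det := isUnit_iff_ne_zero.mpr hpd.det_pos.ne'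
  have hAinv : A * A⁻¹ = 1 := Matrix.mul_nonsing_inv A hdet
  have hAT : Aᵀ = A := by
    rw [hA, Matrix.transpose_add, Matrix.transpose_smul, Matrix.transpose_one, hH]
  set u : Fin n → ℝ := A⁻¹.mulVec gv with hu
  set w : Fin n → ℝ := zv + u with hw
  have hpos : 0 ≤ w ⬝ᵥ A.mulVec w := by
    have := hpd.posSemidef.dotProduct_mulVec_nonneg w
    simpa using this
  have hAg : A.mulVec u = gv := by
    rw [hu, Matrix.mulVec_mulVec, hAinv, Matrix.one_mulVec]
  have h1 : u ⬝ᵥ A.mulVec zv = gv ⬝ᵥ zv := by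
    rw [Matrix.dotProduct_mulVec, ← hAT, Matrix.vecMul_transpose, hAg]
  have hexp : w ⬝ᵥ A.mulVec w
      = zv ⬝ᵥ A.mulVec zv + 2 * (gv ⬝ᵥ zv) + u ⬝ᵥ gv := by
    rw [hw, Matrix.mulVec_add, add_dotProduct, dotProduct_add,
      dotProduct_add, hAg, h1, dotProduct_comm zv gv]
    ring
  have hnorm : zv ⬝ᵥ zv = ‖z‖ ^ 2 := by
    rw [← real_inner_self_eq_norm_sq]
    simp only [PiLp.inner_apply, dotProduct, RCLike.inner_apply, conj_trivial, hzv]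
  have hAz : zv ⬝ᵥ A.mulVec zv = zv ⬝ᵥ H.mulVec zv + (M * r / 2) * ‖z‖ ^ 2 := by
    rw [hA, Matrix.add_mulVec, dotProduct_add, Matrix.smul_mulVec,
      Matrix.one_mulVec, dotProduct_smul, smul_eq_mul, hnorm]
  -- identify the sums in the goal
  have hg1 : (∑ i, ((H + (M * r / 2) • (1 : Matrix (Fin n) (Fin n) ℝ))⁻¹.mulVec
      (fun j => g j)) i * g i) = u ⬝ᵥ gv := rfl
  have hg2 : (∑ i, g i * z i) = gv ⬝ᵥ zv := rfl
  have hg3 : (∑ i, ∑ j, z i * H i j * z j) = zv ⬝ᵥ H.mulVec zv := by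
    simp [dotProduct, Matrix.mulVec, hzv, Finset.mul_sum, mul_assoc]
  rw [hg1, hg2, hg3]
  have ht : 0 ≤ ‖z‖ := norm_nonneg z
  have hcube : M / 12 * r ^ 3 + M / 6 * ‖z‖ ^ 3 - M * r / 4 * ‖z‖ ^ 2 ≥ 0 := by
    nlinarith [sq_nonneg (‖z‖ - r), mul_nonneg (mul_nonneg hM.le ht) (sq_nonneg (‖z‖ - r)),
      mul_nonneg (mul_nonneg hM.le hr) (sq_nonneg (‖z‖ - r))]
  nlinarith [hpos, hexp, hAz, hcube]
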